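/- Let S ⊂ P³ be the cubic surface W²X + X²Y + Y²Z + Z²W = 0 and ζ a primitive 5th root of unity. The automorphism g: (W:X:Y:Z) ↦ (W : ζX : ζ⁻¹Y : ζ³Z) preserves S and fixes exactly 4 points of S, namely the coordinate points (1:0:0:0), (0:1:0:0), (0:0:1:0), (0:0:0:1); the automorphism h: (W:X:Y:Z) ↦ (X:Y:Z:W) also preserves S and permutes these 4 points cyclically. Hence every orbit of the group ⟨g, h⟩ on S has size at least 4. -/

import Mathlib

open Matrix

/-- Projective equality of homogeneous coordinate vectors. -/
def ProjEq {n : ℕ} (v w : Fin n → ℂ) : Prop := ∃ c : ℂ, c ≠ 0 ∧ w = c • v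

/-- The Clebsch cubic form `W²X + X²Y + Y²Z + Z²W` in coordinates
`(W, X, Y, Z) = (v 0, v 1, v 2, v 3)`. -/
def clebsch (v : Fin 4 → ℂ) : ℂ :=
  v 0 ^ 2 * v 1 + v 1 ^ 2 * v 2 + v 2 ^ 2 * v 3 + v 3 ^ 2 * v 0

/-- The diagonal matrix of `g : (W:X:Y:Z) ↦ (W : ζX : ζ⁻¹Y : ζ³Z)`. -/
noncomputable def gMat (ζ : ℂ) : Matrix (Fin 4) (Fin 4) ℂ :=
  Matrix.diagonal ![1, ζ, ζ⁻¹, ζ ^ 3]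

/-- The matrix of the cyclic substitution `h : (W:X:Y:Z) ↦ (X:Y:Z:W)`. -/
def hMat : Matrix (Fin 4) (Fin 4) ℂ :=
  !![0, 1, 0, 0; 0, 0, 1, 0; 0, 0, 0, 1; 1, 0, 0, 0]

lemma zpow_mod {ζ : ℂ} (h5 : ζ ^ 5 = 1) (m : ℕ) : ζ ^ m = ζ ^ (m % 5) := by
  conv_lhs => rw [← Nat.div_add_mod m 5]
  rw [pow_add, pow_mul, h5, one_pow, one_mul]

lemma zne {ζ : ℂ} (hζ : IsPrimitiveRoot ζ 5) {a b : ℕ} (h : a % 5 ≠ b % 5) :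
    ζ ^ a ≠ ζ ^ b := by
  rw [zpow_mod hζ.pow_eq_one a, zpow_mod hζ.pow_eq_one b]
  intro hE
  exact h (hζ.pow_inj (Nat.mod_lt _ (by norm_num)) (Nat.mod_lt _ (by norm_num)) hE)

lemma eig_unique {v : Fin 4 → ℂ} (w : Fin 4 → ℂ)
    (hw : ∀ i j : Fin 4, i ≠ j → w i ≠ w j)
    (hv : v ≠ 0) (c : ℂ) (h : ∀ i, w i * v i = c * v i) :
    ∃ i, ProjEq (Pi.single i 1) v := by
  obtain ⟨i, hi⟩ : ∃ i, v i ≠ 0 := by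
    by_contra h'; push_neg at h'; exact hv (funext h')
  have key : ∀ j, v j ≠ 0 → w j = c := fun j hj => mul_right_cancel₀ hj (h j)
  have hall : ∀ j, j ≠ i → v j = 0 := by
    intro j hji
    by_contra hj
    exact hw j i hji ((key j hj).trans (key i hi).symm)
  refine ⟨i, v i, hi, funext fun j => ?_⟩
  by_cases hj : j = i
  · subst hj; simp
  · simp [hall j hj, Pi.single_apply, hj]

lemma not_projEq_aux {v x y : Fin 4 → ℂ} (w : Fin 4 → ℂ)
    (hxy : ∀ i, ∃ u : ℂ, u ≠ 0 ∧ x i = u * v i ∧ y i = w i * (u * v i))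
    (hw : ∀ i j : Fin 4, i ≠ j → w i ≠ w j)
    (hv : v ≠ 0) (hns : ¬ ∃ i, ProjEq (Pi.single i (1 : ℂ)) v) :
    ¬ ProjEq x y := by
  rintro ⟨c, hc, hEq⟩
  refine hns (eig_unique w hw hv c fun i => ?_)
  obtain ⟨u, hu, hxu, hyu⟩ := hxy i
  have h1 := congrFun hEq i
  rw [Pi.smul_apply, smul_eq_mul, hxu, hyu] at h1
  exact mul_left_cancel₀ hu (by linear_combination h1)

lemma not_projEq_single {p q : Fin 4} (hpq : p ≠ q) {c : ℂ} (hc : c ≠ 0) :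
    ¬ ProjEq (c • (Pi.single p 1 : Fin 4 → ℂ)) (c • (Pi.single q 1 : Fin 4 → ℂ)) := by
  rintro ⟨e, he, heq⟩
  have h1 := congrFun heq q
  simp [Pi.single_apply, hpq, Ne.symm hpq] at h1
  exact hc h1

lemma hact : ∀ i : Fin 4, hMat *ᵥ (Pi.single i (1 : ℂ)) = Pi.single (i - 1) 1 := by
  intro i
  ext j
  fin_cases i <;> fin_cases j <;>
    simp [hMat, Matrix.mulVec, dotProduct, Pi.single_apply,
      Fin.sum_univ_four] <;>
    norm_num [show ((3 : Fin 4) : ℕ) = 3 from rfl] <;>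
    decide

/-- Let `S ⊂ ℙ³` be the cubic surface `W²X + X²Y + Y²Z + Z²W = 0` and `ζ` a
primitive 5th root of unity.  The automorphism
`g : (W:X:Y:Z) ↦ (W : ζX : ζ⁻¹Y : ζ³Z)` preserves `S` (it multiplies the
equation by `ζ`) and its fixed points on `S` are exactly the four coordinate
points; the automorphism `h : (W:X:Y:Z) ↦ (X:Y:Z:W)` also preserves `S` and
permutes the four coordinate points cyclically.  Hence every orbit of the
group `⟨g, h⟩` on `S` has size at least `4`. -/
theorem stmt_17 (ζ : ℂ) (hζ : IsPrimitiveRoot ζ 5) :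
    (∀ v : Fin 4 → ℂ, clebsch (gMat ζ *ᵥ v) = ζ * clebsch v) ∧
    (∀ v : Fin 4 → ℂ, clebsch (hMat *ᵥ v) = clebsch v) ∧
    (∀ v : Fin 4 → ℂ, v ≠ 0 → clebsch v = 0 →
      (ProjEq v (gMat ζ *ᵥ v) ↔ ∃ i : Fin 4, ProjEq (Pi.single i 1) v)) ∧
    (∀ i : Fin 4, hMat *ᵥ (Pi.single i (1 : ℂ)) = Pi.single (i - 1) 1) ∧
    (∀ v : Fin 4 → ℂ, v ≠ 0 → clebsch v = 0 →
      ∃ A₁ A₂ A₃ A₄ : Matrix (Fin 4) (Fin 4) ℂ,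
        A₁ ∈ Submonoid.closure {gMat ζ, hMat} ∧
        A₂ ∈ Submonoid.closure {gMat ζ, hMat} ∧
        A₃ ∈ Submonoid.closure {gMat ζ, hMat} ∧
        A₄ ∈ Submonoid.closure {gMat ζ, hMat} ∧
        ¬ ProjEq (A₁ *ᵥ v) (A₂ *ᵥ v) ∧ ¬ ProjEq (A₁ *ᵥ v) (A₃ *ᵥ v) ∧
        ¬ ProjEq (A₁ *ᵥ v) (A₄ *ᵥ v) ∧ ¬ ProjEq (A₂ *ᵥ v) (A₃ *ᵥ v) ∧
        ¬ ProjEq (A₂ *ᵥ v) (A₄ *ᵥ v) ∧ ¬ ProjEq (A₃ *ᵥ v) (A₄ *ᵥ v)) := by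
  have h5 : ζ ^ 5 = 1 := hζ.pow_eq_one
  have hz0 : ζ ≠ 0 := hζ.ne_zero (by norm_num)
  have hinv : ζ⁻¹ = ζ ^ 4 :=
    (eq_inv_of_mul_eq_one_left (by rw [← pow_succ]; exact h5)).symm
  have hg1c : ∀ (w : Fin 4 → ℂ) (i : Fin 4),
      (gMat ζ *ᵥ w) i = ζ ^ (![0, 1, 4, 3] i) * w i := by
    intro w i
    fin_cases i <;> simp [gMat, Matrix.mulVec_diagonal, hinv]
  have hg2c : ∀ (w : Fin 4 → ℂ) (i : Fin 4),
      ((gMat ζ * gMat ζ) *ᵥ w) i = ζ ^ (![0, 2, 8, 6] i) * w i := by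
    intro w i
    rw [← Matrix.mulVec_mulVec, hg1c, hg1c, ← mul_assoc, ← pow_add,
      show ∀ i : Fin 4, ![0, 1, 4, 3] i + ![0, 1, 4, 3] i = ![0, 2, 8, 6] i from by decide]
  have hg3c : ∀ (w : Fin 4 → ℂ) (i : Fin 4),
      ((gMat ζ * (gMat ζ * gMat ζ)) *ᵥ w) i = ζ ^ (![0, 3, 12, 9] i) * w i := by
    intro w i
    rw [← Matrix.mulVec_mulVec, hg1c, hg2c, ← mul_assoc, ← pow_add,
      show ∀ i : Fin 4, ![0, 1, 4, 3] i + ![0, 2, 8, 6] i = ![0, 3, 12, 9] i from by decide]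
  have dist : ∀ n : Fin 4 → ℕ, (∀ i j : Fin 4, i ≠ j → n i % 5 ≠ n j % 5) →
      ∀ i j : Fin 4, i ≠ j → ζ ^ n i ≠ ζ ^ n j := fun n hn i j hij => zne hζ (hn i j hij)
  refine ⟨?_, ?_, ?_, hact, ?_⟩
  · -- part 1
    intro v
    simp only [clebsch, gMat, Matrix.mulVec_diagonal, Matrix.cons_val_zero,
      Matrix.cons_val_one, Matrix.head_cons, Matrix.cons_val_two, Matrix.tail_cons,
      Matrix.cons_val_three, hinv]
    linear_combination (ζ * v 1 ^ 2 * v 2 + (ζ ^ 6 + ζ) * v 2 ^ 2 * v 3 +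
      ζ * v 3 ^ 2 * v 0) * h5
  · -- part 2
    intro v
    simp only [clebsch, hMat, Matrix.mulVec, dotProduct]
    simp [Fin.sum_univ_four]
    ring
  · -- part 3
    intro v hv _
    constructor
    · rintro ⟨c, hc, hEq⟩
      refine eig_unique (fun i => ζ ^ (![0, 1, 4, 3] i)) (dist _ (by decide)) hv c ?_
      intro i
      have h1 := congrFun hEq i
      rw [hg1c, Pi.smul_apply, smul_eq_mul] at h1
      exact h1
    · rintro ⟨i, c, hc, hveq⟩
      refine ⟨ζ ^ (![0, 1, 4, 3] i), pow_ne_zero _ hz0, ?_⟩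
      funext j
      rw [hg1c, Pi.smul_apply, smul_eq_mul]
      rcases eq_or_ne j i with h | h
      · subst h; rfl
      · have hvj : v j = 0 := by rw [hveq]; simp [Pi.single_apply, h]
        rw [hvj, mul_zero, mul_zero]
  · -- part 5
    intro v hv _
    have hmemG : gMat ζ ∈ Submonoid.closure {gMat ζ, hMat} :=
      Submonoid.subset_closure (Set.mem_insert _ _)
    have hmemH : hMat ∈ Submonoid.closure {gMat ζ, hMat} :=
      Submonoid.subset_closure (Set.mem_insert_of_mem _ rfl)
    by_cases hsng : ∃ i, ProjEq (Pi.single i (1 : ℂ)) v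
    · obtain ⟨i, c, hc, hveq⟩ := hsng
      refine ⟨1, hMat, hMat * hMat, hMat * (hMat * hMat), one_mem _, hmemH,
        mul_mem hmemH hmemH, mul_mem hmemH (mul_mem hmemH hmemH), ?_, ?_, ?_, ?_, ?_, ?_⟩ <;>
      · rw [hveq]
        simp only [Matrix.one_mulVec, ← Matrix.mulVec_mulVec, Matrix.mulVec_smul, hact]
        exact not_projEq_single (by fin_cases i <;> decide) hc
    · refine ⟨1, gMat ζ, gMat ζ * gMat ζ, gMat ζ * (gMat ζ * gMat ζ), one_mem _, hmemG,
        mul_mem hmemG hmemG, mul_mem hmemG (mul_mem hmemG hmemG), ?_, ?_, ?_, ?_, ?_, ?_⟩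
      · refine not_projEq_aux (fun i => ζ ^ (![0, 1, 4, 3] i)) ?_ (dist _ (by decide)) hv hsng
        intro i
        refine ⟨1, one_ne_zero, by rw [Matrix.one_mulVec, one_mul], ?_⟩
        rw [hg1c, one_mul]
      · refine not_projEq_aux (fun i => ζ ^ (![0, 2, 8, 6] i)) ?_ (dist _ (by decide)) hv hsng
        intro i
        refine ⟨1, one_ne_zero, by rw [Matrix.one_mulVec, one_mul], ?_⟩
        rw [hg2c, one_mul]
      · refine not_projEq_aux (fun i => ζ ^ (![0, 3, 12, 9] i)) ?_ (dist _ (by decide)) hv hsng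
        intro i
        refine ⟨1, one_ne_zero, by rw [Matrix.one_mulVec, one_mul], ?_⟩
        rw [hg3c, one_mul]
      · refine not_projEq_aux (fun i => ζ ^ (![0, 1, 4, 3] i)) ?_ (dist _ (by decide)) hv hsng
        intro i
        refine ⟨ζ ^ (![0, 1, 4, 3] i), pow_ne_zero _ hz0, hg1c v i, ?_⟩
        rw [hg2c, ← mul_assoc, ← pow_add,
          show ∀ i : Fin 4, ![0, 1, 4, 3] i + ![0, 1, 4, 3] i = ![0, 2, 8, 6] i from by decide]
      · refine not_projEq_aux (fun i => ζ ^ (![0, 2, 8, 6] i)) ?_ (dist _ (by decide)) hv hsng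
        intro i
        refine ⟨ζ ^ (![0, 1, 4, 3] i), pow_ne_zero _ hz0, hg1c v i, ?_⟩
        rw [hg3c, ← mul_assoc, ← pow_add,
          show ∀ i : Fin 4, ![0, 2, 8, 6] i + ![0, 1, 4, 3] i = ![0, 3, 12, 9] i from by decide]
      · refine not_projEq_aux (fun i => ζ ^ (![0, 1, 4, 3] i)) ?_ (dist _ (by decide)) hv hsng
        intro i
        refine ⟨ζ ^ (![0, 2, 8, 6] i), pow_ne_zero _ hz0, hg2c v i, ?_⟩
        rw [hg3c, ← mul_assoc, ← pow_add,
          show ∀ i : Fin 4, ![0, 1, 4, 3] i + ![0, 2, 8, 6] i = ![0, 3, 12, 9] i from by decide]
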